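/- Let H₁, …, Hₙ be a line arrangement in general position on the torus ℝ²/ℤ², i.e. each Hᵢ is the image under the quotient map of an affine line in ℝ² with primitive direction hᵢ ∈ ℤ², no point of the torus lies on three of the lines, any two distinct lines whose directions are parallel (hᵢ = ±hⱼ) are disjoint, and not all of the directions are pairwise parallel. Then every connected component of the complement (ℝ²/ℤ²) \ (H₁ ∪ … ∪ Hₙ), equipped with the subspace topology, is homeomorphic to the open unit disc {x ∈ ℝ² : ‖x‖ < 1}. -/

import Mathlib

open Set Metric Bornology

namespace Stmt5Aux

/-- `det(x, u)` as a linear map in `x`. -/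
noncomputable def det2 (u : Fin 2 → ℝ) : (Fin 2 → ℝ) →ₗ[ℝ] ℝ where
  toFun x := x 0 * u 1 - x 1 * u 0
  map_add' a b := by simp only [Pi.add_apply]; ring
  map_smul' c a := by simp only [Pi.smul_apply, smul_eq_mul, RingHom.id_apply]; ring

lemma det2_apply (u x : Fin 2 → ℝ) : det2 u x = x 0 * u 1 - x 1 * u 0 := rfl

lemma det2_self (u : Fin 2 → ℝ) : det2 u u = 0 := by rw [det2_apply]; ring

lemma det2_continuous (u : Fin 2 → ℝ) : Continuous (det2 u) :=
  ((continuous_apply 0).mul continuous_const).sub ((continuous_apply 1).mul continuous_const)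

lemma cramer (u v x : Fin 2 → ℝ) : (det2 v u) • x = (det2 v x) • u - (det2 u x) • v := by
  funext i
  fin_cases i <;>
    simp only [det2_apply, Pi.smul_apply, Pi.sub_apply, smul_eq_mul, Fin.isValue, Fin.mk_zero, Fin.mk_one] <;> ring

lemma exists_smul_of_det2_eq_zero {u x : Fin 2 → ℝ} (hu : u 0 ≠ 0 ∨ u 1 ≠ 0)
    (hx : det2 u x = 0) : ∃ t : ℝ, x = t • u := by
  rw [det2_apply, sub_eq_zero] at hx
  rcases hu with hu | hu
  · refine ⟨x 0 / u 0, funext fun i => ?_⟩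
    fin_cases i <;> simp only [Pi.smul_apply, smul_eq_mul, Fin.isValue, Fin.zero_eta, Fin.mk_one]
    · field_simp
    · field_simp; linarith [hx]
  · refine ⟨x 1 / u 1, funext fun i => ?_⟩
    fin_cases i <;> simp only [Pi.smul_apply, smul_eq_mul, Fin.isValue, Fin.zero_eta, Fin.mk_one]
    · field_simp; linarith [hx]
    · field_simp

lemma prim_ne_zero {a : Fin 2 → ℤ} (ha : Int.gcd (a 0) (a 1) = 1) :
    ((a 0 : ℝ)) ≠ 0 ∨ ((a 1 : ℝ)) ≠ 0 := by
  by_contra hcon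
  push_neg at hcon
  obtain ⟨h0, h1⟩ := hcon
  rw [Int.cast_eq_zero] at h0 h1
  rw [h0, h1] at ha
  simp at ha

lemma det_int_ne_zero {a b : Fin 2 → ℤ} (ha : Int.gcd (a 0) (a 1) = 1)
    (hb : Int.gcd (b 0) (b 1) = 1) (h1 : a ≠ b) (h2 : a ≠ -b) :
    a 0 * b 1 - a 1 * b 0 ≠ 0 := by
  intro heq
  rw [sub_eq_zero] at heq
  obtain ⟨s, t, hst⟩ := Int.isCoprime_iff_gcd_eq_one.mpr ha
  set k := s * b 0 + t * b 1 with hk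
  have hb0 : b 0 = k * a 0 := by rw [hk]; linear_combination (-(b 0)) * hst - t * heq
  have hb1 : b 1 = k * a 1 := by rw [hk]; linear_combination (-(b 1)) * hst + s * heq
  have hgcd : Int.gcd (b 0) (b 1) = k.natAbs * Int.gcd (a 0) (a 1) := by
    rw [hb0, hb1]; exact Int.gcd_mul_left k (a 0) (a 1)
  rw [ha, mul_one, hb] at hgcd
  have hk1 : k = 1 ∨ k = -1 := by omega
  rcases hk1 with hk1 | hk1
  · rw [hk1, one_mul] at hb0 hb1
    exact h1 (funext fun i => by fin_cases i <;> simp only [Fin.mk_zero, Fin.mk_one, Fin.isValue] <;> omega)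
  · rw [hk1] at hb0 hb1
    exact h2 (funext fun i => by
      fin_cases i <;> simp only [Pi.neg_apply, Fin.isValue, Fin.mk_zero, Fin.mk_one] <;> omega)

lemma mem_intLattice_aux {x : Fin 2 → ℝ} (hx : ∀ i, ∃ m : ℤ, x i = (m : ℝ)) :
    ∃ m : Fin 2 → ℤ, x = fun i => (m i : ℝ) := by
  choose m hm using hx
  exact ⟨m, funext hm⟩

lemma det2_int {u : Fin 2 → ℤ} {x : Fin 2 → ℝ} (hx : ∀ i, ∃ m : ℤ, x i = (m : ℝ)) :
    ∃ k : ℤ, det2 (fun i => (u i : ℝ)) x = (k : ℝ) := by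
  obtain ⟨m, rfl⟩ := mem_intLattice_aux hx
  exact ⟨m 0 * u 1 - m 1 * u 0, by rw [det2_apply]; push_cast; ring⟩

lemma exists_int_det {u : Fin 2 → ℤ} (hu : Int.gcd (u 0) (u 1) = 1) (k : ℤ) :
    ∃ x : Fin 2 → ℝ, (∀ i, ∃ m : ℤ, x i = (m : ℝ)) ∧
      det2 (fun i => (u i : ℝ)) x = (k : ℝ) := by
  obtain ⟨s, t, hst⟩ := Int.isCoprime_iff_gcd_eq_one.mpr hu
  refine ⟨fun i => ((![k * t, -(k * s)] : Fin 2 → ℤ) i : ℝ),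
    fun i => ⟨![k * t, -(k * s)] i, rfl⟩, ?_⟩
  rw [det2_apply]
  simp only [Matrix.cons_val_zero, Matrix.cons_val_one, Matrix.head_cons, Fin.isValue]
  have hst' : (s : ℝ) * u 0 + t * u 1 = 1 := by exact_mod_cast congrArg (Int.cast : ℤ → ℝ) hst
  push_cast
  linear_combination (k : ℝ) * hst'

lemma side_of_preconnected {S : Set (Fin 2 → ℝ)} (hS : IsPreconnected S)
    (g : (Fin 2 → ℝ) →ₗ[ℝ] ℝ) (hg : Continuous g) {c : ℝ} (hc : ∀ z ∈ S, g z ≠ c)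
    {a b : Fin 2 → ℝ} (ha : a ∈ S) (hb : b ∈ S) (hlt : g a < c) : g b < c := by
  by_contra hge
  push_neg at hge
  obtain ⟨z, hz, hz'⟩ := hS.intermediate_value ha hb hg.continuousOn ⟨hlt.le, hge⟩
  exact hc z hz hz'

lemma gap_aux {S : Set (Fin 2 → ℝ)} (hS : IsPreconnected S)
    (g : (Fin 2 → ℝ) →ₗ[ℝ] ℝ) (hg : Continuous g) {c : ℝ}
    (hc : ∀ z ∈ S, ∀ k : ℤ, g z ≠ c + (k : ℝ)) {a b : Fin 2 → ℝ}
    (ha : a ∈ S) (hb : b ∈ S) : g b - g a < 1 := by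
  by_contra hge
  push_neg at hge
  set k := ⌈g a - c⌉ with hk
  have h1 : g a ≤ c + (k : ℝ) := by
    have := Int.le_ceil (g a - c); linarith
  have h2 : c + (k : ℝ) ≤ g b := by
    have := Int.ceil_lt_add_one (g a - c); linarith
  obtain ⟨z, hz, hz'⟩ := hS.intermediate_value ha hb hg.continuousOn ⟨h1, h2⟩
  exact hc z hz k hz'

lemma gap_of_preconnected {S : Set (Fin 2 → ℝ)} (hS : IsPreconnected S)
    (g : (Fin 2 → ℝ) →ₗ[ℝ] ℝ) (hg : Continuous g) {c : ℝ}
    (hc : ∀ z ∈ S, ∀ k : ℤ, g z ≠ c + (k : ℝ)) {a b : Fin 2 → ℝ}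
    (ha : a ∈ S) (hb : b ∈ S) : |g b - g a| < 1 := by
  rw [abs_sub_lt_iff]
  exact ⟨gap_aux hS g hg hc ha hb, gap_aux hS g hg hc hb ha⟩

end Stmt5Aux

/-- The integer lattice `ℤ² ⊆ ℝ²` as an additive subgroup of `Fin 2 → ℝ`. -/
def intLattice : AddSubgroup (Fin 2 → ℝ) where
  carrier := {x | ∀ i, ∃ m : ℤ, x i = (m : ℝ)}
  zero_mem' := fun i => ⟨0, by simp⟩
  add_mem' := by
    intro a b ha hb i
    obtain ⟨p, hp⟩ := ha i
    obtain ⟨q, hq⟩ := hb i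
    exact ⟨p + q, by simp [hp, hq]⟩
  neg_mem' := by
    intro a ha i
    obtain ⟨p, hp⟩ := ha i
    exact ⟨-p, by simp [hp]⟩

/-- The torus `ℝ²/ℤ²` (with the quotient topology). -/
abbrev Torus2 : Type := (Fin 2 → ℝ) ⧸ intLattice

/-- The quotient map `π : ℝ² → ℝ²/ℤ²`. -/
def torusMk : (Fin 2 → ℝ) → Torus2 := QuotientAddGroup.mk

/-- The closed geodesic (line) on the torus with base point `p ∈ ℝ²` and direction
`u ∈ ℤ²`: the image `π({p + t·u : t ∈ ℝ})`. -/
def torusGeodesic (p : Fin 2 → ℝ) (u : Fin 2 → ℤ) : Set Torus2 :=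
  torusMk '' {x : Fin 2 → ℝ | ∃ t : ℝ, x = p + t • (fun i => (u i : ℝ))}

namespace Stmt5Aux

lemma torusMk_eq_iff {a b : Fin 2 → ℝ} : torusMk a = torusMk b ↔ a - b ∈ intLattice :=
  QuotientAddGroup.eq_iff_sub_mem

lemma mem_intLattice_iff {x : Fin 2 → ℝ} :
    x ∈ intLattice ↔ ∀ i, ∃ m : ℤ, x i = (m : ℝ) := Iff.rfl

end Stmt5Aux

open Set Metric Bornology Stmt5Aux
/-- Every connected component of the complement of a line arrangement in
general position on the torus is homeomorphic to the open unit disc in `ℝ²`. -/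
theorem stmt_5 (n : ℕ) (h : Fin n → Fin 2 → ℤ) (p : Fin n → Fin 2 → ℝ)
    (L : Fin n → Set Torus2) (hL : ∀ i, L i = torusGeodesic (p i) (h i))
    (hprim : ∀ i, Int.gcd (h i 0) (h i 1) = 1)
    (hthree : ∀ x : Torus2, {i : Fin n | x ∈ L i}.ncard ≤ 2)
    (hpar : ∀ i j, i ≠ j → (h i = h j ∨ h i = -h j) → Disjoint (L i) (L j))
    (hnpar : ∃ i j, h i ≠ h j ∧ h i ≠ -h j) :
    ∀ x ∈ (⋃ i, L i)ᶜ,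
      Nonempty (↥(connectedComponentIn (⋃ i, L i)ᶜ x) ≃ₜ
        ↥(Metric.ball (0 : EuclideanSpace ℝ (Fin 2)) 1)) := by
  classical
  intro x hxU
  set U : Set Torus2 := (⋃ i, L i)ᶜ with hU
  set u : Fin n → (Fin 2 → ℝ) := fun i => (fun j => ((h i j : ℝ))) with hu
  set g : Fin n → ((Fin 2 → ℝ) →ₗ[ℝ] ℝ) := fun i => Stmt5Aux.det2 (u i) with hg
  set c : Fin n → ℝ := fun i => g i (p i) with hc
  have hgcont : ∀ i, Continuous (g i) := fun i => Stmt5Aux.det2_continuous (u i)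
  -- membership characterisation of the lines, upstairs
  have memL : ∀ (i : Fin n) (z : Fin 2 → ℝ),
      torusMk z ∈ L i ↔ ∃ k : ℤ, g i z = c i + (k : ℝ) := by
    intro i z
    rw [hL i]
    constructor
    · rintro ⟨s, ⟨t, rfl⟩, hs⟩
      have hmem : (p i + t • u i) - z ∈ intLattice := torusMk_eq_iff.mp hs
      obtain ⟨k, hk⟩ := Stmt5Aux.det2_int (u := h i) (mem_intLattice_iff.mp hmem)
      refine ⟨-k, ?_⟩
      have h0 : g i ((p i + t • u i) - z) = c i - g i z := by
        simp only [map_sub, map_add, map_smul, smul_eq_mul, hc]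
        have : g i (u i) = 0 := Stmt5Aux.det2_self (u i)
        rw [this]; ring
      have hkc : c i - g i z = (k : ℝ) := by rw [← h0]; exact hk
      push_cast
      linarith
    · rintro ⟨k, hk⟩
      obtain ⟨m, hmLat, hmdet⟩ := Stmt5Aux.exists_int_det (hprim i) (-k)
      have hdet0 : g i (z + m - p i) = 0 := by
        have : g i m = ((-k : ℤ) : ℝ) := hmdet
        simp only [map_sub, map_add, this, hk]
        push_cast
        ring
      obtain ⟨t, ht⟩ := Stmt5Aux.exists_smul_of_det2_eq_zero
        (Stmt5Aux.prim_ne_zero (hprim i)) hdet0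
      refine ⟨z + m, ⟨t, by rw [← ht]; abel⟩, ?_⟩
      rw [torusMk_eq_iff]
      have : z + m - z = m := by abel
      rw [this]
      exact hmLat
  -- the preimage of the union of the lines
  have hpre : torusMk ⁻¹' (⋃ i, L i) = ⋃ i, {z | ∃ k : ℤ, g i z = c i + (k : ℝ)} := by
    ext z
    simp only [mem_preimage, mem_iUnion, mem_setOf_eq]
    exact exists_congr fun i => memL i z
  set Ut : Set (Fin 2 → ℝ) := (⋃ i, {z | ∃ k : ℤ, g i z = c i + (k : ℝ)})ᶜ with hUt
  have hUtpre : Ut = torusMk ⁻¹' U := by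
    rw [hU, Set.preimage_compl, hpre, hUt]
  have hUtopen : IsOpen Ut := by
    rw [hUt, isOpen_compl_iff]
    refine isClosed_iUnion_of_finite fun i => ?_
    have h1 : {z | ∃ k : ℤ, g i z = c i + (k : ℝ)}
        = g i ⁻¹' (Set.range fun k : ℤ => c i + (k : ℝ)) := by
      ext z
      simp only [mem_preimage, mem_setOf_eq, Set.mem_range]
      exact exists_congr fun k => eq_comm
    rw [h1]
    refine IsClosed.preimage (hgcont i) ?_
    have h2 : (Set.range fun k : ℤ => c i + (k : ℝ))
        = (Homeomorph.addLeft (c i)) '' (Set.range ((↑) : ℤ → ℝ)) := by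
      ext r
      simp only [Set.mem_range, Set.mem_image, Homeomorph.coe_addLeft]
      constructor
      · rintro ⟨k, hk⟩
        exact ⟨(k : ℝ), ⟨k, rfl⟩, hk⟩
      · rintro ⟨a, ⟨k, rfl⟩, hk⟩
        exact ⟨k, hk⟩
    rw [h2]
    exact (Homeomorph.addLeft (c i)).isClosedMap _ Int.isClosedEmbedding_coe_real.isClosed_range
  -- lift the base point
  obtain ⟨xt, hxt⟩ := Quotient.exists_rep x
  have hxt : torusMk xt = x := hxt
  have hxtU : xt ∈ Ut := by
    rw [hUtpre, mem_preimage, hxt]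
    exact hxU
  set Ct := connectedComponentIn Ut xt with hCt
  have hCtsub : Ct ⊆ Ut := connectedComponentIn_subset _ _
  have hxtCt : xt ∈ Ct := mem_connectedComponentIn hxtU
  have hCtconn : IsPreconnected Ct := isPreconnected_connectedComponentIn
  have hCtopen : IsOpen Ct := hUtopen.connectedComponentIn
  have hAvoid : ∀ z ∈ Ct, ∀ i, ∀ k : ℤ, g i z ≠ c i + (k : ℝ) := by
    intro z hz i k hk
    exact (hCtsub hz) (mem_iUnion.mpr ⟨i, ⟨k, hk⟩⟩)
  -- convexity of Ct
  have hCtconv : Convex ℝ Ct := by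
    set P : Set (Fin 2 → ℝ) := ⋂ i, ⋂ k : ℤ,
      {y | (g i xt < c i + (k : ℝ) → g i y < c i + (k : ℝ)) ∧
           (c i + (k : ℝ) < g i xt → c i + (k : ℝ) < g i y)} with hP
    have hPconv : Convex ℝ P := by
      refine convex_iInter fun i => convex_iInter fun k => ?_
      rcases lt_trichotomy (g i xt) (c i + (k : ℝ)) with hlt | heq | hgt
      · have hEq : {y | (g i xt < c i + (k : ℝ) → g i y < c i + (k : ℝ)) ∧
            (c i + (k : ℝ) < g i xt → c i + (k : ℝ) < g i y)}
            = {y | g i y < c i + (k : ℝ)} := by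
          ext y
          simp only [mem_setOf_eq]
          constructor
          · exact fun hy => hy.1 hlt
          · exact fun hy => ⟨fun _ => hy, fun hgt' => absurd hlt (not_lt.mpr hgt'.le)⟩
        rw [hEq]
        exact convex_halfSpace_lt (LinearMap.isLinear _) _
      · exact absurd heq (hAvoid xt hxtCt i k)
      · have hEq : {y | (g i xt < c i + (k : ℝ) → g i y < c i + (k : ℝ)) ∧
            (c i + (k : ℝ) < g i xt → c i + (k : ℝ) < g i y)}
            = {y | c i + (k : ℝ) < g i y} := by
          ext y
          simp only [mem_setOf_eq]
          constructor
          · exact fun hy => hy.2 hgt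
          · exact fun hy => ⟨fun hlt' => absurd hgt (not_lt.mpr hlt'.le), fun _ => hy⟩
        rw [hEq]
        exact convex_halfSpace_gt (LinearMap.isLinear _) _
    have hPsubU : P ⊆ Ut := by
      intro y hy
      rw [hUt, mem_compl_iff]
      intro hcon
      obtain ⟨i, hi⟩ := mem_iUnion.mp hcon
      obtain ⟨k, hk⟩ := hi
      have hy' := mem_iInter.mp (mem_iInter.mp hy i) k
      rcases lt_trichotomy (g i xt) (c i + (k : ℝ)) with hlt | heq | hgt
      · exact (hy'.1 hlt).ne hk
      · exact hAvoid xt hxtCt i k heq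
      · exact (hy'.2 hgt).ne' hk
    have hxtP : xt ∈ P :=
      mem_iInter.mpr fun i => mem_iInter.mpr fun k => ⟨fun hh => hh, fun hh => hh⟩
    have hPCt : P ⊆ Ct := hPconv.isPreconnected.subset_connectedComponentIn hxtP hPsubU
    have hCtP : Ct ⊆ P := by
      intro y hy
      refine mem_iInter.mpr fun i => mem_iInter.mpr fun k => ⟨fun hlt => ?_, fun hgt => ?_⟩
      · exact Stmt5Aux.side_of_preconnected hCtconn (g i) (hgcont i)
          (fun z hz => hAvoid z hz i k) hxtCt hy hlt
      · have hres := Stmt5Aux.side_of_preconnected hCtconn (-(g i)) ((hgcont i).neg)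
          (c := -(c i + (k : ℝ)))
          (fun z hz hzeq => by
            simp only [LinearMap.neg_apply, neg_inj] at hzeq
            exact hAvoid z hz i k hzeq)
          hxtCt hy
          (by simp only [LinearMap.neg_apply]; linarith)
        simp only [LinearMap.neg_apply] at hres
        linarith
    have hPeq : P = Ct := subset_antisymm hPCt hCtP
    rw [← hPeq]
    exact hPconv
  -- the two non-parallel directions
  obtain ⟨i₀, j₀, hne1, hne2⟩ := hnpar
  have hGap : ∀ i, ∀ a ∈ Ct, ∀ b ∈ Ct, |g i b - g i a| < 1 := fun i a ha b hb =>
    Stmt5Aux.gap_of_preconnected hCtconn (g i) (hgcont i)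
      (fun z hz k => hAvoid z hz i k) ha hb
  have hd : Stmt5Aux.det2 (u j₀) (u i₀) ≠ 0 := by
    have hz := Stmt5Aux.det_int_ne_zero (hprim i₀) (hprim j₀) hne1 hne2
    rw [Stmt5Aux.det2_apply]
    intro hcon
    apply hz
    have hcast : ((h i₀ 0 * h j₀ 1 - h i₀ 1 * h j₀ 0 : ℤ) : ℝ) = 0 := by
      push_cast
      simpa [hu] using hcon
    exact_mod_cast hcast
  -- boundedness of Ct
  have hBound : IsBounded Ct := by
    rw [isBounded_iff_forall_norm_le]
    refine ⟨|Stmt5Aux.det2 (u j₀) (u i₀)|⁻¹ *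
      ((|g j₀ xt| + 1) * ‖u i₀‖ + (|g i₀ xt| + 1) * ‖u j₀‖), fun y hy => ?_⟩
    have h1 : |g i₀ y| ≤ |g i₀ xt| + 1 := by
      have hgap := hGap i₀ xt hxtCt y hy
      have habs := abs_sub_abs_le_abs_sub (g i₀ y) (g i₀ xt)
      linarith
    have h2 : |g j₀ y| ≤ |g j₀ xt| + 1 := by
      have hgap := hGap j₀ xt hxtCt y hy
      have habs := abs_sub_abs_le_abs_sub (g j₀ y) (g j₀ xt)
      linarith
    have hyeq : y = (Stmt5Aux.det2 (u j₀) (u i₀))⁻¹ •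
        ((Stmt5Aux.det2 (u j₀) y) • u i₀ - (Stmt5Aux.det2 (u i₀) y) • u j₀) := by
      rw [← Stmt5Aux.cramer (u i₀) (u j₀) y, smul_smul, inv_mul_cancel₀ hd, one_smul]
    calc ‖y‖ = ‖(Stmt5Aux.det2 (u j₀) (u i₀))⁻¹ •
        ((Stmt5Aux.det2 (u j₀) y) • u i₀ - (Stmt5Aux.det2 (u i₀) y) • u j₀)‖ := by rw [← hyeq]
    _ ≤ |Stmt5Aux.det2 (u j₀) (u i₀)|⁻¹ * (|g j₀ y| * ‖u i₀‖ + |g i₀ y| * ‖u j₀‖) := by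
        rw [norm_smul, Real.norm_eq_abs, abs_inv]
        refine mul_le_mul_of_nonneg_left ?_ (by positivity)
        refine (norm_sub_le _ _).trans ?_
        rw [norm_smul, norm_smul, Real.norm_eq_abs, Real.norm_eq_abs]
    _ ≤ _ := by
        refine mul_le_mul_of_nonneg_left ?_ (by positivity)
        have hn1 : (0:ℝ) ≤ ‖u i₀‖ := norm_nonneg _
        have hn2 : (0:ℝ) ≤ ‖u j₀‖ := norm_nonneg _
        nlinarith [abs_nonneg (g j₀ y), abs_nonneg (g i₀ y)]
  -- injectivity of torusMk on Ct
  have hInj : ∀ a ∈ Ct, ∀ b ∈ Ct, torusMk a = torusMk b → a = b := by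
    intro a ha b hb hab
    have hm : a - b ∈ intLattice := torusMk_eq_iff.mp hab
    have hzero : ∀ i : Fin n, g i (a - b) = 0 := by
      intro i
      obtain ⟨k, hk⟩ := Stmt5Aux.det2_int (u := h i) (mem_intLattice_iff.mp hm)
      have hk' : g i (a - b) = (k : ℝ) := hk
      have h1 : |g i a - g i b| < 1 := hGap i b hb a ha
      rw [map_sub] at hk'
      have h2 : |(k : ℝ)| < 1 := by rw [← hk'] ; exact h1
      have h3 := abs_lt.mp h2
      have hlow : (-1 : ℤ) < k := by exact_mod_cast h3.1
      have hhigh : k < 1 := by exact_mod_cast h3.2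
      have hk0 : k = 0 := by omega
      calc g i (a - b) = g i a - g i b := map_sub _ _ _
      _ = (k : ℝ) := hk'
      _ = 0 := by rw [hk0]; norm_num
    have e1 : Stmt5Aux.det2 (u j₀) (a - b) = 0 := hzero j₀
    have e2 : Stmt5Aux.det2 (u i₀) (a - b) = 0 := hzero i₀
    have hcr := Stmt5Aux.cramer (u i₀) (u j₀) (a - b)
    rw [e1, e2, zero_smul, zero_smul, sub_zero] at hcr
    have hab0 : a - b = 0 := by
      rcases smul_eq_zero.mp hcr with hcase | hcase
      · exact absurd hcase hd
      · exact hcase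
    exact sub_eq_zero.mp hab0
  -- the saturation of Ct
  set sat := torusMk ⁻¹' (torusMk '' Ct) with hsat
  have hCt_sat : Ct ⊆ sat := fun z hz => mem_preimage.mpr (mem_image_of_mem _ hz)
  have hUshift : ∀ m ∈ intLattice, ∀ z ∈ Ut, z - m ∈ Ut := by
    intro m hm z hz
    rw [hUt, mem_compl_iff] at hz ⊢
    intro hcon
    obtain ⟨i, hk⟩ := mem_iUnion.mp hcon
    obtain ⟨k, hk⟩ := hk
    apply hz
    obtain ⟨km, hkm⟩ := Stmt5Aux.det2_int (u := h i) (mem_intLattice_iff.mp hm)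
    have hkm' : g i m = (km : ℝ) := hkm
    refine mem_iUnion.mpr ⟨i, ⟨k + km, ?_⟩⟩
    have hsplit : g i z = g i (z - m) + g i m := by rw [map_sub]; ring
    rw [hsplit, hk, hkm']
    push_cast
    ring
  have hsatUt : sat ⊆ Ut := by
    intro z hz
    obtain ⟨w, hwCt, hw⟩ := mem_preimage.mp hz
    have hm : w - z ∈ intLattice := torusMk_eq_iff.mp hw
    have hres := hUshift (w - z) hm w (hCtsub hwCt)
    have heq : w - (w - z) = z := by abel
    rwa [heq] at hres
  have hcomp_sat : ∀ z ∈ sat, connectedComponentIn Ut z ⊆ sat := by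
    intro z hz w hw
    obtain ⟨w', hw'Ct, hw'⟩ := mem_preimage.mp hz
    have hzU : z ∈ Ut := hsatUt hz
    have hmzw : w' - z ∈ intLattice := torusMk_eq_iff.mp hw'
    have hUtimg : (Homeomorph.addRight (w' - z)) '' Ut = Ut := by
      ext v
      constructor
      · rintro ⟨v', hv', rfl⟩
        have hm : z - w' ∈ intLattice := by
          have := intLattice.neg_mem hmzw
          rwa [neg_sub] at this
        have hres := hUshift (z - w') hm v' hv'
        have heq : v' - (z - w') = (Homeomorph.addRight (w' - z)) v' := by
          simp only [Homeomorph.coe_addRight]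
          abel
        rwa [heq] at hres
      · intro hv
        refine ⟨v - (w' - z), hUshift (w' - z) hmzw v hv, ?_⟩
        simp only [Homeomorph.coe_addRight]
        abel
    have himg := (Homeomorph.addRight (w' - z)).image_connectedComponentIn (s := Ut) hzU
    rw [hUtimg] at himg
    have hez : (Homeomorph.addRight (w' - z)) z = w' := by
      simp only [Homeomorph.coe_addRight]
      abel
    rw [hez] at himg
    have hCtw' : connectedComponentIn Ut w' = Ct := (connectedComponentIn_eq hw'Ct).symm
    have hwmem : w + (w' - z) ∈ Ct := by
      rw [← hCtw', ← himg]
      exact ⟨w, hw, rfl⟩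
    refine mem_preimage.mpr ⟨w + (w' - z), hwmem, ?_⟩
    rw [torusMk_eq_iff]
    have heq2 : (w + (w' - z)) - w = w' - z := by abel
    rw [heq2]
    exact hmzw
  have hBopen : IsOpen (Ut \ sat) := by
    rw [isOpen_iff_mem_nhds]
    intro z hz
    refine mem_nhds_iff.mpr ⟨connectedComponentIn Ut z, ?_, hUtopen.connectedComponentIn,
      mem_connectedComponentIn hz.1⟩
    intro w hw
    refine ⟨connectedComponentIn_subset _ _ hw, fun hwsat => hz.2 ?_⟩
    have heq : connectedComponentIn Ut z = connectedComponentIn Ut w := connectedComponentIn_eq hw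
    refine hcomp_sat w hwsat ?_
    rw [← heq]
    exact mem_connectedComponentIn hz.1
  -- downstairs
  have hmk_open : IsOpenMap torusMk := QuotientAddGroup.isOpenMap_coe
  have hmk_cont : Continuous torusMk := continuous_quot_mk
  have hAopen : IsOpen (torusMk '' Ct) := hmk_open _ hCtopen
  have hBopen' : IsOpen (torusMk '' (Ut \ sat)) := hmk_open _ hBopen
  have hAU : torusMk '' Ct ⊆ U := by
    rintro _ ⟨z, hz, rfl⟩
    have hres := hCtsub hz
    rw [hUtpre] at hres
    exact hres
  have hxA : x ∈ torusMk '' Ct := ⟨xt, hxtCt, hxt⟩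
  have hUAB : U ⊆ torusMk '' Ct ∪ torusMk '' (Ut \ sat) := by
    intro y hy
    obtain ⟨z, hz⟩ := Quotient.exists_rep y
    have hz : torusMk z = y := hz
    have hzU : z ∈ Ut := by rw [hUtpre, mem_preimage, hz]; exact hy
    by_cases hzs : z ∈ sat
    · exact Or.inl (hz ▸ mem_preimage.mp hzs)
    · exact Or.inr ⟨z, ⟨hzU, hzs⟩, hz⟩
  have hABdisj : ∀ y, y ∈ torusMk '' Ct → y ∈ torusMk '' (Ut \ sat) → False := by
    rintro y ⟨z1, hz1, rfl⟩ ⟨z2, hz2, hz⟩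
    exact hz2.2 (mem_preimage.mpr (by rw [hz]; exact mem_image_of_mem _ hz1))
  have hCCA : connectedComponentIn U x = torusMk '' Ct := by
    apply subset_antisymm
    · by_contra hnot
      rw [not_subset] at hnot
      obtain ⟨y, hyCC, hyA⟩ := hnot
      have hCCU : connectedComponentIn U x ⊆ U := connectedComponentIn_subset _ _
      have hyB : y ∈ torusMk '' (Ut \ sat) := by
        rcases hUAB (hCCU hyCC) with hcase | hcase
        · exact absurd hcase hyA
        · exact hcase
      obtain ⟨w, hwCC, hwA, hwB⟩ := isPreconnected_connectedComponentIn
        (torusMk '' Ct) (torusMk '' (Ut \ sat)) hAopen hBopen' (hCCU.trans hUAB)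
        ⟨x, mem_connectedComponentIn hxU, hxA⟩ ⟨y, hyCC, hyB⟩
      exact hABdisj w hwA hwB
    · exact (hCtconn.image torusMk hmk_cont.continuousOn).subset_connectedComponentIn hxA hAU
  -- the homeomorphism between Ct and the component downstairs
  let f : ↥Ct → ↥(connectedComponentIn U x) := fun z =>
    ⟨torusMk z.1, by rw [hCCA]; exact mem_image_of_mem _ z.2⟩
  have hfbij : Function.Bijective f := by
    constructor
    · intro z1 z2 hz
      exact Subtype.ext (hInj _ z1.2 _ z2.2 (congrArg Subtype.val hz))
    · rintro ⟨y, hy⟩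
      rw [hCCA] at hy
      obtain ⟨z, hz, rfl⟩ := hy
      exact ⟨⟨z, hz⟩, rfl⟩
  have hfcont : Continuous f := Continuous.subtype_mk (hmk_cont.comp continuous_subtype_val) _
  have hfopen : IsOpenMap f := by
    intro V hV
    rw [isOpen_induced_iff] at hV
    obtain ⟨O, hO, rfl⟩ := hV
    have himg : f '' (Subtype.val ⁻¹' O) = Subtype.val ⁻¹' (torusMk '' (O ∩ Ct)) := by
      ext ⟨y, hy⟩
      constructor
      · rintro ⟨⟨z, hzCt⟩, hzO, heq⟩
        exact mem_preimage.mpr ⟨z, ⟨hzO, hzCt⟩, congrArg Subtype.val heq⟩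
      · intro hmem
        obtain ⟨z, ⟨hzO, hzCt⟩, hz⟩ := mem_preimage.mp hmem
        exact ⟨⟨z, hzCt⟩, hzO, Subtype.ext hz⟩
    rw [himg]
    exact (hmk_open _ (hO.inter hCtopen)).preimage continuous_subtype_val
  let homeo1 : ↥Ct ≃ₜ ↥(connectedComponentIn U x) :=
    Equiv.toHomeomorphOfContinuousOpen (Equiv.ofBijective f hfbij) hfcont hfopen
  -- transfer to the Euclidean plane and map to the unit ball
  let φ : (Fin 2 → ℝ) ≃L[ℝ] EuclideanSpace ℝ (Fin 2) := (EuclideanSpace.equiv (Fin 2) ℝ).symm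
  have hsconv : Convex ℝ (⇑φ '' Ct) :=
    hCtconv.is_linear_image ⟨fun a b => map_add φ a b, fun r a => map_smul φ r a⟩
  have hsopen : IsOpen (⇑φ '' Ct) := φ.toHomeomorph.isOpenMap _ hCtopen
  have hsbdd : IsBounded (⇑φ '' Ct) :=
    (φ : (Fin 2 → ℝ) →L[ℝ] EuclideanSpace ℝ (Fin 2)).lipschitz.isBounded_image hBound
  have hsne : (interior (⇑φ '' Ct)).Nonempty := by
    rw [hsopen.interior_eq]
    exact ⟨φ xt, mem_image_of_mem _ hxtCt⟩
  obtain ⟨Φ, hΦ, -, -⟩ :=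
    exists_homeomorph_image_interior_closure_frontier_eq_unitBall hsconv hsne hsbdd
  rw [hsopen.interior_eq] at hΦ
  exact ⟨homeo1.symm.trans ((φ.toHomeomorph.image Ct).trans
    ((Φ.image (⇑φ '' Ct)).trans (Homeomorph.setCongr hΦ)))⟩
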